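/- For a finite knowledge base K={F_1,...,F_m} and a formula G, the following are equivalent: (1) K ⊨ G; (2) 1+P(G) belongs to the ideal ⟨1+P(F_1),...,1+P(F_m)⟩ + I_2; (3) V(⟨1+P(F_1),...,1+P(F_m)⟩) ⊆ V(⟨1+P(G)⟩). -/

import Mathlib

inductive Fm (V : Type) : Type
  | bot : Fm V
  | var : V → Fm V
  | not : Fm V → Fm V
  | and : Fm V → Fm V → Fm V
  | or  : Fm V → Fm V → Fm V
  | imp : Fm V → Fm V → Fm V
  | iff : Fm V → Fm V → Fm V

def Fm.eval {V : Type} (v : V → Bool) : Fm V → Bool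
  | .bot => false
  | .var p => v p
  | .not F => !(F.eval v)
  | .and F G => F.eval v && G.eval v
  | .or F G => F.eval v || G.eval v
  | .imp F G => !(F.eval v) || G.eval v
  | .iff F G => F.eval v == G.eval v

noncomputable def Fm.poly {n : ℕ} : Fm (Fin n) → MvPolynomial (Fin n) (ZMod 2)
  | .bot => 0
  | .var i => MvPolynomial.X i
  | .not F => 1 + F.poly
  | .and F G => F.poly * G.poly
  | .or F G => F.poly + G.poly + F.poly * G.poly
  | .imp F G => 1 + F.poly + F.poly * G.poly
  | .iff F G => 1 + F.poly + G.poly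

/-- The ideal `I_2 = ⟨x_i + x_i², i = 1..n⟩`. -/
noncomputable def fieldIdeal (n : ℕ) : Ideal (MvPolynomial (Fin n) (ZMod 2)) :=
  Ideal.span (Set.range fun i : Fin n => MvPolynomial.X i + (MvPolynomial.X i) ^ 2)

/-- The vanishing set of a set of polynomials over `F_2`. -/
def zeroSet {n : ℕ} (J : Set (MvPolynomial (Fin n) (ZMod 2))) : Set (Fin n → ZMod 2) :=
  {u | ∀ a ∈ J, MvPolynomial.eval u a = 0}

section Aux
open MvPolynomial

abbrev R2 (n : ℕ) := MvPolynomial (Fin n) (ZMod 2)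

lemma two_eq_zero_aux {n : ℕ} : (2 : R2 n) = 0 := CharTwo.two_eq_zero

lemma addself {n : ℕ} (a : R2 n) : a + a = 0 := CharTwo.add_self_eq_zero a

lemma X_pow_mem {n : ℕ} (i : Fin n) (k : ℕ) :
    (X i : R2 n) ^ (k + 1) + X i ∈ fieldIdeal n := by
  induction k with
  | zero => simp [addself]
  | succ k ih =>
    have hgen : (X i : R2 n) + X i ^ 2 ∈ fieldIdeal n := Ideal.subset_span ⟨i, rfl⟩
    have heq : (X i : R2 n) ^ (k + 1 + 1) + X i
        = X i * (X i ^ (k + 1) + X i) + (X i + X i ^ 2) := by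
      linear_combination (-(X i : R2 n) ^ 2) * two_eq_zero_aux
    rw [heq]
    exact add_mem (Ideal.mul_mem_left _ _ ih) hgen

lemma prod_mod {n : ℕ} {α : Type*} (s : Finset α) (f g : α → R2 n)
    (h : ∀ a ∈ s, f a + g a ∈ fieldIdeal n) :
    (∏ a ∈ s, f a) + ∏ a ∈ s, g a ∈ fieldIdeal n := by
  classical
  induction s using Finset.induction_on with
  | empty => simp [addself]
  | insert a s ha ih =>
    rw [Finset.prod_insert ha, Finset.prod_insert ha]
    have h1 := ih (fun b hb => h b (Finset.mem_insert_of_mem hb))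
    have h2 := h a (Finset.mem_insert_self a s)
    have heq : f a * ∏ b ∈ s, f b + g a * ∏ b ∈ s, g b
        = f a * ((∏ b ∈ s, f b) + ∏ b ∈ s, g b) + (f a + g a) * ∏ b ∈ s, g b := by
      linear_combination (-(f a * ∏ b ∈ s, g b)) * two_eq_zero_aux
    rw [heq]
    exact add_mem (Ideal.mul_mem_left _ _ h1) (Ideal.mul_mem_right _ _ h2)

lemma monomial_reduce {n : ℕ} (e : Fin n →₀ ℕ) (c : ZMod 2) :
    ∃ r ∈ restrictDegree (Fin n) (ZMod 2) 1,
      (monomial e c : R2 n) + r ∈ fieldIdeal n := by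
  classical
  refine ⟨C c * ∏ i ∈ e.support, X i, ?_, ?_⟩
  · rw [mem_restrictDegree_iff_sup]
    intro i
    rw [← degreeOf_def]
    calc degreeOf i (C c * ∏ j ∈ e.support, X j)
        ≤ degreeOf i (C c : R2 n) + degreeOf i (∏ j ∈ e.support, X j) := degreeOf_mul_le _ _ _
      _ = degreeOf i (∏ j ∈ e.support, (X j : R2 n)) := by rw [degreeOf_C]; ring
      _ ≤ ∑ j ∈ e.support, degreeOf i (X j : R2 n) := degreeOf_prod_le _ _ _
      _ = ∑ j ∈ e.support, if i = j then 1 else 0 := by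
          refine Finset.sum_congr rfl fun j _ => degreeOf_X i j
      _ ≤ 1 := by
          rw [Finset.sum_ite_eq e.support i (fun _ => 1)]
          split <;> simp
  · rw [monomial_eq, Finsupp.prod]
    have heq : C c * (∏ i ∈ e.support, (X i : R2 n) ^ e i) + C c * ∏ i ∈ e.support, X i
        = C c * ((∏ i ∈ e.support, X i ^ e i) + ∏ i ∈ e.support, X i) := by ring
    rw [heq]
    refine Ideal.mul_mem_left _ _ (prod_mod _ _ _ ?_)
    intro i hi
    obtain ⟨k, hk⟩ : ∃ k, e i = k + 1 := by
      have := Finsupp.mem_support_iff.mp hi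
      exact ⟨e i - 1, by omega⟩
    rw [hk]; exact X_pow_mem i k

lemma reduce {n : ℕ} (p : R2 n) :
    ∃ r ∈ restrictDegree (Fin n) (ZMod 2) 1, p + r ∈ fieldIdeal n := by
  classical
  have : ∀ e ∈ p.support, ∃ r ∈ restrictDegree (Fin n) (ZMod 2) 1,
      (monomial e (coeff e p) : R2 n) + r ∈ fieldIdeal n :=
    fun e _ => monomial_reduce e (coeff e p)
  choose r hr1 hr2 using this
  refine ⟨∑ e ∈ p.support.attach, r e e.2, sum_mem fun e _ => hr1 e e.2, ?_⟩
  have hp : p = ∑ e ∈ p.support.attach, monomial e.1 (coeff e.1 p) := by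
    rw [Finset.sum_attach _ fun e => monomial e (coeff e p)]
    exact (support_sum_monomial_coeff p).symm
  have hsum : ∑ e ∈ p.support.attach,
      ((monomial e.1 (coeff e.1 p) : R2 n) + r e e.2) ∈ fieldIdeal n :=
    sum_mem fun e _ => hr2 e e.2
  have heq : ∑ e ∈ p.support.attach, ((monomial e.1 (coeff e.1 p) : R2 n) + r e e.2)
      = p + ∑ e ∈ p.support.attach, r e e.2 := by
    rw [Finset.sum_add_distrib, ← hp]
  rwa [heq] at hsum

lemma mem_fieldIdeal_of_vanish {n : ℕ} (p : R2 n)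
    (h : ∀ u : Fin n → ZMod 2, eval u p = 0) : p ∈ fieldIdeal n := by
  obtain ⟨r, hr, hpr⟩ := reduce p
  have hvan : ∀ q ∈ fieldIdeal n, ∀ u : Fin n → ZMod 2, eval u q = 0 := by
    intro q hq u
    have : fieldIdeal n ≤ RingHom.ker (eval u) := by
      rw [fieldIdeal, Ideal.span_le]
      rintro _ ⟨i, rfl⟩
      simp only [SetLike.mem_coe, RingHom.mem_ker, map_add, map_pow, eval_X]
      have : ∀ x : ZMod 2, x + x ^ 2 = 0 := by decide
      exact this _
    exact this hq
  have hrv : ∀ u : Fin n → ZMod 2, eval u r = 0 := by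
    intro u
    have := hvan _ hpr u
    rw [map_add, h u, zero_add] at this
    exact this
  have hr0 : r = 0 := by
    refine eq_zero_of_eval_eq_zero (Fin n) (ZMod 2) r hrv ?_
    have : Fintype.card (ZMod 2) - 1 = 1 := by simp
    rw [this]; exact hr
  have : p = p + r := by rw [hr0, add_zero]
  rw [this]; exact hpr

def b2z (b : Bool) : ZMod 2 := if b then 1 else 0

lemma eval_poly {n : ℕ} (v : Fin n → Bool) (F : Fm (Fin n)) :
    eval (fun i => b2z (v i)) F.poly = b2z (F.eval v) := by
  induction F with
  | bot => simp [Fm.poly, Fm.eval, b2z]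
  | var i => simp [Fm.poly, Fm.eval]
  | not F ih =>
    simp only [Fm.poly, Fm.eval, map_add, map_one, ih]
    cases F.eval v <;> simp [b2z] <;> decide
  | and F G ihF ihG =>
    simp only [Fm.poly, Fm.eval, map_mul, ihF, ihG]
    cases F.eval v <;> cases G.eval v <;> simp [b2z]
  | or F G ihF ihG =>
    simp only [Fm.poly, Fm.eval, map_add, map_mul, ihF, ihG]
    cases F.eval v <;> cases G.eval v <;> simp [b2z] <;> decide
  | imp F G ihF ihG =>
    simp only [Fm.poly, Fm.eval, map_add, map_mul, map_one, ihF, ihG]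
    cases F.eval v <;> cases G.eval v <;> simp [b2z] <;> decide
  | iff F G ihF ihG =>
    simp only [Fm.poly, Fm.eval, map_add, map_one, ihF, ihG]
    cases F.eval v <;> cases G.eval v <;> simp [b2z] <;> decide

lemma one_add_prod_mem {n : ℕ} (K : Finset (Fm (Fin n))) :
    (1 : R2 n) + ∏ F ∈ K, F.poly ∈
      Ideal.span ((fun F : Fm (Fin n) => 1 + F.poly) '' K) := by
  classical
  induction K using Finset.induction_on with
  | empty => simp [addself]
  | insert a s ha ih =>
    rw [Finset.prod_insert ha]
    have hmono : Ideal.span ((fun F : Fm (Fin n) => 1 + F.poly) '' s) ≤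
        Ideal.span ((fun F : Fm (Fin n) => 1 + F.poly) '' (insert a s : Finset (Fm (Fin n)))) := by
      apply Ideal.span_mono
      apply Set.image_mono
      intro x hx
      simp only [Finset.coe_insert, Set.mem_insert_iff]
      exact Or.inr hx
    have h1 : ((1 : R2 n) + a.poly) ∈
        Ideal.span ((fun F : Fm (Fin n) => 1 + F.poly) '' (insert a s : Finset (Fm (Fin n)))) := by
      apply Ideal.subset_span
      exact ⟨a, by simp, rfl⟩
    have heq : (1 : R2 n) + a.poly * ∏ F ∈ s, F.poly
        = (1 + a.poly) + a.poly * (1 + ∏ F ∈ s, F.poly) := by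
      linear_combination (-(a.poly : R2 n)) * two_eq_zero_aux
    rw [heq]
    exact add_mem h1 (Ideal.mul_mem_left _ _ (hmono ih))

lemma fieldIdeal_vanish {n : ℕ} {q : R2 n} (hq : q ∈ fieldIdeal n)
    (u : Fin n → ZMod 2) : eval u q = 0 := by
  have : fieldIdeal n ≤ RingHom.ker (eval u) := by
    rw [fieldIdeal, Ideal.span_le]
    rintro _ ⟨i, rfl⟩
    simp only [SetLike.mem_coe, RingHom.mem_ker, map_add, map_pow, eval_X]
    have : ∀ x : ZMod 2, x + x ^ 2 = 0 := by decide
    exact this _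
  exact this hq

lemma u_repr {n : ℕ} (u : Fin n → ZMod 2) :
    u = fun i => b2z (decide (u i = 1)) := by
  funext i
  have : ∀ x : ZMod 2, x = b2z (decide (x = 1)) := by decide
  exact this _

lemma span_vanish {n : ℕ} {S : Set (R2 n)} {u : Fin n → ZMod 2}
    (hS : ∀ s ∈ S, eval u s = 0) {a : R2 n} (ha : a ∈ Ideal.span S) : eval u a = 0 := by
  have : Ideal.span S ≤ RingHom.ker (eval u) := by
    rw [Ideal.span_le]; intro s hs; exact hS s hs
  exact this ha


end Aux

open MvPolynomial in
theorem stmt4 {n : ℕ} (K : Finset (Fm (Fin n))) (G : Fm (Fin n)) :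
    ((∀ v : Fin n → Bool, (∀ F ∈ K, F.eval v = true) → G.eval v = true) ↔
      1 + G.poly ∈ Ideal.span ((fun F : Fm (Fin n) => 1 + F.poly) '' K) + fieldIdeal n) ∧
    ((∀ v : Fin n → Bool, (∀ F ∈ K, F.eval v = true) → G.eval v = true) ↔
      zeroSet ((Ideal.span ((fun F : Fm (Fin n) => 1 + F.poly) '' K) :
          Ideal (MvPolynomial (Fin n) (ZMod 2))) : Set (MvPolynomial (Fin n) (ZMod 2))) ⊆
        zeroSet ((Ideal.span {1 + G.poly} : Ideal (MvPolynomial (Fin n) (ZMod 2))) :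
          Set (MvPolynomial (Fin n) (ZMod 2)))) := by
  classical
  have h12 : (∀ v : Fin n → Bool, (∀ F ∈ K, F.eval v = true) → G.eval v = true) →
      1 + G.poly ∈ Ideal.span ((fun F : Fm (Fin n) => 1 + F.poly) '' K) + fieldIdeal n := by
    intro h
    set q : R2 n := (1 + G.poly) * ∏ F ∈ K, F.poly with hq
    have hqI : q ∈ fieldIdeal n := by
      apply mem_fieldIdeal_of_vanish
      intro u
      set v : Fin n → Bool := fun i => decide (u i = 1) with hv
      have hu : u = fun i => b2z (v i) := u_repr u
      rw [hq, map_mul, map_add, map_one, map_prod]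
      by_cases hall : ∀ F ∈ K, F.eval v = true
      · have hG : G.eval v = true := h v hall
        rw [hu, eval_poly, hG]
        have : (1 : ZMod 2) + b2z true = 0 := by decide
        rw [this, zero_mul]
      · push_neg at hall
        obtain ⟨F, hF, hFv⟩ := hall
        have : eval u F.poly = 0 := by
          rw [hu, eval_poly, Bool.eq_false_iff.mpr hFv]; rfl
        rw [Finset.prod_eq_zero hF this, mul_zero]
    have heq : (1 : R2 n) + G.poly
        = (1 + G.poly) * (1 + ∏ F ∈ K, F.poly) + q := by
      rw [hq]
      linear_combination (-((1 + G.poly) * ∏ F ∈ K, (Fm.poly F)) : R2 n) * two_eq_zero_aux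
    rw [heq, Submodule.add_eq_sup]
    exact add_mem
      (Submodule.mem_sup_left (Ideal.mul_mem_left _ _ (one_add_prod_mem K)))
      (Submodule.mem_sup_right hqI)
  have h23 : (1 + G.poly ∈ Ideal.span ((fun F : Fm (Fin n) => 1 + F.poly) '' K) + fieldIdeal n) →
      zeroSet ((Ideal.span ((fun F : Fm (Fin n) => 1 + F.poly) '' K) :
          Ideal (MvPolynomial (Fin n) (ZMod 2))) : Set (MvPolynomial (Fin n) (ZMod 2))) ⊆
        zeroSet ((Ideal.span {1 + G.poly} : Ideal (MvPolynomial (Fin n) (ZMod 2))) :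
          Set (MvPolynomial (Fin n) (ZMod 2))) := by
    intro hmem u hu
    rw [Submodule.add_eq_sup, Submodule.mem_sup] at hmem
    obtain ⟨y, hy, z, hz, hyz⟩ := hmem
    have hG0 : eval u (1 + G.poly) = 0 := by
      rw [← hyz, map_add, hu y hy, fieldIdeal_vanish hz u, add_zero]
    intro a ha
    obtain ⟨c, rfl⟩ := Ideal.mem_span_singleton'.mp ha
    rw [map_mul, hG0, mul_zero]
  have h31 : (zeroSet ((Ideal.span ((fun F : Fm (Fin n) => 1 + F.poly) '' K) :
          Ideal (MvPolynomial (Fin n) (ZMod 2))) : Set (MvPolynomial (Fin n) (ZMod 2))) ⊆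
        zeroSet ((Ideal.span {1 + G.poly} : Ideal (MvPolynomial (Fin n) (ZMod 2))) :
          Set (MvPolynomial (Fin n) (ZMod 2)))) →
      (∀ v : Fin n → Bool, (∀ F ∈ K, F.eval v = true) → G.eval v = true) := by
    intro hsub v hK
    set u : Fin n → ZMod 2 := fun i => b2z (v i) with hu
    have humem : u ∈ zeroSet ((Ideal.span ((fun F : Fm (Fin n) => 1 + F.poly) '' K) :
        Ideal (MvPolynomial (Fin n) (ZMod 2))) : Set (MvPolynomial (Fin n) (ZMod 2))) := by
      intro a ha
      refine span_vanish ?_ ha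
      rintro _ ⟨F, hF, rfl⟩
      rw [map_add, map_one, hu, eval_poly, hK F (by exact_mod_cast hF)]
      decide
    have hGz := hsub humem (1 + G.poly) (Ideal.subset_span (Set.mem_singleton _))
    rw [map_add, map_one, hu, eval_poly] at hGz
    cases hGe : G.eval v
    · rw [hGe] at hGz; exact absurd hGz (by decide)
    · rfl
  exact ⟨⟨h12, fun h => h31 (h23 h)⟩, ⟨fun h => h23 (h12 h), h31⟩⟩
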